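/- Suppose for some 0 < β ≤ 1 that E[|Q|^β] < ∞ and ρ_β = E[Σ_{i=1}^N C_i^β] < 1. Then the series R = Σ_{n=0}^∞ W_n converges almost surely, and E[|R|^β] < ∞. -/

import Mathlib

open MeasureTheory ProbabilityTheory Filter
open scoped ENNReal NNReal Topology

noncomputable section

/-- Product `Π` of the weights `C` along the branch leading to a node of the weighted
branching tree. Nodes are lists of child indices, written child-index-first:
the node `i :: l` is the `i`-th child of the node `l`, and `[]` is the root. -/
def pathWeight {Ω : Type*} (X : List ℕ → Ω → ℝ × (ℕ → ℝ)) : List ℕ → Ω → ℝ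
  | [], _ => 1
  | (i :: l), ω => pathWeight X l ω * (X l ω).2 i

/-- pathWeight depending on a value assignment. -/
def pathWeightV (v : List ℕ → ℝ × (ℕ → ℝ)) : List ℕ → ℝ
  | [] => 1
  | (i :: l) => pathWeightV v l * (v l).2 i

lemma pathWeight_eq_V {Ω : Type*} (X : List ℕ → Ω → ℝ × (ℕ → ℝ)) (l : List ℕ) (ω : Ω) :
    pathWeight X l ω = pathWeightV (fun m => X m ω) l := by
  induction l with
  | nil => rfl
  | cons i l ih => simp [pathWeight, pathWeightV, ih]

lemma pathWeightV_congr {v w : List ℕ → ℝ × (ℕ → ℝ)} {l : List ℕ}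
    (h : ∀ m, m <:+ l → v m = w m) : pathWeightV v l = pathWeightV w l := by
  induction l with
  | nil => rfl
  | cons i l ih =>
      have h' : ∀ m, m <:+ l → v m = w m := fun m hm =>
        h m (hm.trans (List.suffix_cons i l))
      simp [pathWeightV, ih h', h l (List.suffix_cons i l)]

lemma measurable_pathWeightV (l : List ℕ) :
    Measurable fun v : List ℕ → ℝ × (ℕ → ℝ) => pathWeightV v l := by
  induction l with
  | nil => simpa [pathWeightV] using measurable_const
  | cons i l ih =>
      exact ih.mul ((measurable_pi_apply i).comp ((measurable_pi_apply l).snd))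

lemma measurable_pathWeight {Ω : Type*} [MeasurableSpace Ω] {X : List ℕ → Ω → ℝ × (ℕ → ℝ)}
    (hmeas : ∀ l, Measurable (X l)) (l : List ℕ) :
    Measurable fun ω => pathWeight X l ω := by
  induction l with
  | nil => simpa [pathWeight] using measurable_const
  | cons i l ih =>
      exact ih.mul ((measurable_pi_apply i).comp (hmeas l).snd)

lemma pathWeight_nonneg {Ω : Type*} {X : List ℕ → Ω → ℝ × (ℕ → ℝ)}
    (hCpos : ∀ l i ω, 0 ≤ (X l ω).2 i) (l : List ℕ) (ω : Ω) :
    0 ≤ pathWeight X l ω := by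
  induction l with
  | nil => exact zero_le_one
  | cons i l ih => exact mul_nonneg ih (hCpos l i ω)

lemma rpow_sub_one_mul {x : ℝ≥0∞} {r : ℝ} (hr : 1 ≤ r) : x ^ (r - 1) * x = x ^ r := by
  rcases eq_or_lt_of_le hr with rfl | hr1
  · simp
  rcases eq_or_ne x 0 with rfl | hx0
  · rw [ENNReal.zero_rpow_of_pos (by linarith), ENNReal.zero_rpow_of_pos (by linarith), mul_zero]
  rcases eq_or_ne x ⊤ with rfl | hxt
  · rw [ENNReal.top_rpow_of_pos (by linarith), ENNReal.top_rpow_of_pos (by linarith)]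
    simp
  · nth_rewrite 2 [← ENNReal.rpow_one x]
    rw [← ENNReal.rpow_add _ _ hx0 hxt, sub_add_cancel]

lemma tsum_rpow_ge {ι : Type*} (b : ι → ℝ≥0∞) {r : ℝ} (hr : 1 ≤ r) :
    ∑' i, b i ^ r ≤ (∑' i, b i) ^ r := by
  calc ∑' i, b i ^ r ≤ ∑' i, (∑' j, b j) ^ (r - 1) * b i := by
        refine ENNReal.tsum_le_tsum fun i => ?_
        rw [← rpow_sub_one_mul (x := b i) hr]
        exact mul_le_mul_left (ENNReal.rpow_le_rpow (ENNReal.le_tsum i) (by linarith)) _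
    _ = (∑' j, b j) ^ (r - 1) * ∑' i, b i := ENNReal.tsum_mul_left
    _ = (∑' j, b j) ^ r := rpow_sub_one_mul hr

lemma tsum_rpow_le {ι : Type*} (a : ι → ℝ≥0∞) {β : ℝ} (hβ0 : 0 < β) (hβ1 : β ≤ 1) :
    (∑' i, a i) ^ β ≤ ∑' i, a i ^ β := by
  have hr : 1 ≤ 1 / β := by
    rw [le_div_iff₀ hβ0]; linarith
  have h1 : ∑' i, a i = ∑' i, (a i ^ β) ^ (1 / β) := by
    refine tsum_congr fun i => ?_
    rw [← ENNReal.rpow_mul, mul_one_div_cancel hβ0.ne', ENNReal.rpow_one]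
  have h2 : ∑' i, a i ≤ (∑' i, a i ^ β) ^ (1 / β) := h1 ▸ tsum_rpow_ge _ hr
  calc (∑' i, a i) ^ β ≤ ((∑' i, a i ^ β) ^ (1 / β)) ^ β := ENNReal.rpow_le_rpow h2 hβ0.le
    _ = ∑' i, a i ^ β := by
        rw [← ENNReal.rpow_mul, one_div_mul_cancel hβ0.ne', ENNReal.rpow_one]

lemma ofReal_abs_tsum_rpow_le {ι : Type*} (a : ι → ℝ) {β : ℝ} (hβ0 : 0 < β) (hβ1 : β ≤ 1) :
    ENNReal.ofReal (|∑' i, a i| ^ β) ≤ ∑' i, ENNReal.ofReal (|a i| ^ β) := by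
  by_cases hs : Summable a
  · have hs' : Summable fun i => |a i| := hs.abs
    have h1 : |∑' i, a i| ≤ ∑' i, |a i| := by
      simpa [Real.norm_eq_abs] using norm_tsum_le_tsum_norm (f := a) (by simpa [Real.norm_eq_abs] using hs')
    calc ENNReal.ofReal (|∑' i, a i| ^ β)
        ≤ ENNReal.ofReal ((∑' i, |a i|) ^ β) :=
          ENNReal.ofReal_le_ofReal (Real.rpow_le_rpow (abs_nonneg _) h1 hβ0.le)
      _ = ENNReal.ofReal (∑' i, |a i|) ^ β := by
          rw [ENNReal.ofReal_rpow_of_nonneg (tsum_nonneg fun i => abs_nonneg _) hβ0.le]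
      _ = (∑' i, ENNReal.ofReal |a i|) ^ β := by
          rw [ENNReal.ofReal_tsum_of_nonneg (fun i => abs_nonneg _) hs']
      _ ≤ ∑' i, ENNReal.ofReal |a i| ^ β := tsum_rpow_le _ hβ0 hβ1
      _ = ∑' i, ENNReal.ofReal (|a i| ^ β) := by
          refine tsum_congr fun i => ?_
          rw [ENNReal.ofReal_rpow_of_nonneg (abs_nonneg _) hβ0.le]
  · rw [tsum_eq_zero_of_not_summable hs]
    simp [Real.zero_rpow hβ0.ne']

section Indep
variable {Ω : Type*} [MeasurableSpace Ω] {μ : Measure Ω}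
  {X : List ℕ → Ω → ℝ × (ℕ → ℝ)}

lemma indep_step (hmeas : ∀ l, Measurable (X l))
    (hindep : iIndepFun X μ) {β : ℝ} (hβ : 0 ≤ β) (i : ℕ) (l : List ℕ)
    (F G : ℝ × (ℕ → ℝ) → ℝ≥0∞) (hF : Measurable F) (hG : Measurable G) :
    ∫⁻ ω, F (X (i :: l) ω) * (ENNReal.ofReal (pathWeight X l ω ^ β) * G (X l ω)) ∂μ
      = (∫⁻ ω, F (X (i :: l) ω) ∂μ)
        * ∫⁻ ω, ENNReal.ofReal (pathWeight X l ω ^ β) * G (X l ω) ∂μ := by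
  classical
  set S : Finset (List ℕ) := l.tails.toFinset with hS
  have hlS : l ∈ S := by simp [hS, List.mem_tails]
  have hdisj : Disjoint ({i :: l} : Finset (List ℕ)) S := by
    simp only [Finset.disjoint_singleton_left, hS, List.mem_toFinset, List.mem_tails]
    intro h
    have := h.length_le
    simp at this
  have h1 := hindep.indepFun_finset {i :: l} S hdisj hmeas
  set e : (S → ℝ × (ℕ → ℝ)) → (List ℕ → ℝ × (ℕ → ℝ)) :=
    fun t m => if h : m ∈ S then t ⟨m, h⟩ else default with he
  have hemeas : Measurable e := by
    refine measurable_pi_lambda _ fun m => ?_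
    by_cases h : m ∈ S
    · simp only [he, dif_pos h]; exact measurable_pi_apply _
    · simp only [he, dif_neg h]; exact measurable_const
  set φ₁ : (({i :: l} : Finset (List ℕ)) → ℝ × (ℕ → ℝ)) → ℝ≥0∞ :=
    fun t => F (t ⟨i :: l, Finset.mem_singleton_self _⟩) with hφ₁
  set φ₂ : (S → ℝ × (ℕ → ℝ)) → ℝ≥0∞ :=
    fun t => ENNReal.ofReal (pathWeightV (e t) l ^ β) * G (e t l) with hφ₂
  have hφ₁m : Measurable φ₁ := hF.comp (measurable_pi_apply _)
  have hφ₂m : Measurable φ₂ := by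
    refine Measurable.mul ?_ (hG.comp ((measurable_pi_apply l).comp hemeas))
    exact (((Real.continuous_rpow_const hβ).measurable).comp
      ((measurable_pathWeightV l).comp hemeas)).ennreal_ofReal
  have h2 := (h1.comp hφ₁m hφ₂m)
  have heq1 : (φ₁ ∘ fun a (j : ({i :: l} : Finset (List ℕ))) => X j a)
      = fun ω => F (X (i :: l) ω) := rfl
  have heq2 : (φ₂ ∘ fun a (j : S) => X j a)
      = fun ω => ENNReal.ofReal (pathWeight X l ω ^ β) * G (X l ω) := by
    funext ω
    have hext : ∀ m, m <:+ l → e (fun j : S => X j ω) m = X m ω := by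
      intro m hm
      simp only [he, dif_pos (by simpa [hS, List.mem_tails] using hm : m ∈ S)]
    have hpw : pathWeightV (e fun j : S => X j ω) l = pathWeight X l ω := by
      rw [pathWeight_eq_V]
      exact pathWeightV_congr fun m hm => hext m hm
    simp only [Function.comp_apply, hφ₂, hpw, hext l (List.suffix_refl l)]
  rw [heq1, heq2] at h2
  exact lintegral_mul_eq_lintegral_mul_lintegral_of_indepFun''
    ((hF.comp (hmeas _)).aemeasurable)
    ((((((Real.continuous_rpow_const hβ).measurable).comp
        (measurable_pathWeight hmeas l)).ennreal_ofReal).mul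
      (hG.comp (hmeas l))).aemeasurable) h2


def consEquiv (n : ℕ) : ℕ × {l : List ℕ // l.length = n} ≃ {l : List ℕ // l.length = n + 1} where
  toFun p := ⟨p.1 :: p.2.1, by simp [p.2.2]⟩
  invFun l := (l.1.headI, ⟨l.1.tail, by
    rcases l with ⟨(_ | ⟨a, m⟩), h⟩
    · simp at h
    · exact Nat.succ_injective (by simpa using h)⟩)
  left_inv p := by rcases p with ⟨i, ⟨l, h⟩⟩; simp
  right_inv l := by
    rcases l with ⟨(_ | ⟨a, m⟩), h⟩
    · simp at h
    · simp

lemma keyA [IsProbabilityMeasure μ] (hmeas : ∀ l, Measurable (X l))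
    (hindep : iIndepFun X μ)
    (hident : ∀ l, μ.map (X l) = μ.map (X []))
    {β : ℝ} (hβ : 0 ≤ β)
    (hCpos : ∀ l i ω, 0 ≤ (X l ω).2 i) (n : ℕ) :
    ∀ F : ℝ × (ℕ → ℝ) → ℝ≥0∞, Measurable F →
    ∑' l : {l : List ℕ // l.length = n},
        ∫⁻ ω, F (X l.1 ω) * ENNReal.ofReal (pathWeight X l.1 ω ^ β) ∂μ
      = (∫⁻ ω, F (X [] ω) ∂μ)
        * (∫⁻ ω, ∑' j, ENNReal.ofReal ((X [] ω).2 j ^ β) ∂μ) ^ n := by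
  induction n with
  | zero =>
    intro F hF
    rw [tsum_eq_single (⟨[], rfl⟩ : {l : List ℕ // l.length = 0})]
    · simp [pathWeight, Real.one_rpow]
    · rintro ⟨l, hl⟩ hne
      exact absurd (Subtype.ext (List.length_eq_zero_iff.mp hl)) hne
  | succ n ih =>
    intro F hF
    have hident' : ∀ m, ∫⁻ ω, F (X m ω) ∂μ = ∫⁻ ω, F (X [] ω) ∂μ := by
      intro m
      rw [← lintegral_map hF (hmeas m), hident m, lintegral_map hF (hmeas [])]
    set Fp : ℝ × (ℕ → ℝ) → ℝ≥0∞ := fun x => ∑' j, ENNReal.ofReal (x.2 j ^ β) with hFp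
    have hFpm : Measurable Fp := by
      refine Measurable.ennreal_tsum fun j => ?_
      exact (((Real.continuous_rpow_const hβ).measurable).comp
        ((measurable_pi_apply j).comp measurable_snd)).ennreal_ofReal
    have hmain :
        ∑' l : {l : List ℕ // l.length = n + 1},
            ∫⁻ ω, F (X l.1 ω) * ENNReal.ofReal (pathWeight X l.1 ω ^ β) ∂μ
        = ∑' p : ℕ × {l : List ℕ // l.length = n},
            ∫⁻ ω, F (X (p.1 :: p.2.1) ω)
              * ENNReal.ofReal (pathWeight X (p.1 :: p.2.1) ω ^ β) ∂μ :=
      ((consEquiv n).tsum_eq _).symm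
    rw [hmain, ENNReal.tsum_prod', ENNReal.tsum_comm]
    have hterm : ∀ (i : ℕ) (l : List ℕ),
        ∫⁻ ω, F (X (i :: l) ω) * ENNReal.ofReal (pathWeight X (i :: l) ω ^ β) ∂μ
        = (∫⁻ ω, F (X [] ω) ∂μ)
          * ∫⁻ ω, ENNReal.ofReal (pathWeight X l ω ^ β)
              * ENNReal.ofReal ((X l ω).2 i ^ β) ∂μ := by
      intro i l
      have hsplit : ∀ ω, ENNReal.ofReal (pathWeight X (i :: l) ω ^ β)
          = ENNReal.ofReal (pathWeight X l ω ^ β) * ENNReal.ofReal ((X l ω).2 i ^ β) := by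
        intro ω
        rw [show pathWeight X (i :: l) ω = pathWeight X l ω * (X l ω).2 i from rfl,
          Real.mul_rpow (pathWeight_nonneg hCpos l ω) (hCpos l i ω),
          ENNReal.ofReal_mul (Real.rpow_nonneg (pathWeight_nonneg hCpos l ω) β)]
      simp_rw [hsplit]
      rw [indep_step hmeas hindep hβ i l F (fun x => ENNReal.ofReal (x.2 i ^ β)) hF
        ((((Real.continuous_rpow_const hβ).measurable).comp
          ((measurable_pi_apply i).comp measurable_snd)).ennreal_ofReal), hident' (i :: l)]
    have hinner : ∀ l : List ℕ,
        ∑' i : ℕ, ∫⁻ ω, ENNReal.ofReal (pathWeight X l ω ^ β)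
            * ENNReal.ofReal ((X l ω).2 i ^ β) ∂μ
        = ∫⁻ ω, Fp (X l ω) * ENNReal.ofReal (pathWeight X l ω ^ β) ∂μ := by
      intro l
      rw [← lintegral_tsum]
      · refine lintegral_congr fun ω => ?_
        rw [ENNReal.tsum_mul_left]
        simp only [hFp]
        ring
      · intro i
        exact (((((Real.continuous_rpow_const hβ).measurable).comp
            (measurable_pathWeight hmeas l)).ennreal_ofReal).mul
          ((((Real.continuous_rpow_const hβ).measurable).comp
            ((measurable_pi_apply i).comp (hmeas l).snd)).ennreal_ofReal)).aemeasurable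
    calc ∑' (l : {l : List ℕ // l.length = n}) (i : ℕ),
            ∫⁻ ω, F (X (i :: l.1) ω) * ENNReal.ofReal (pathWeight X (i :: l.1) ω ^ β) ∂μ
        = ∑' (l : {l : List ℕ // l.length = n}),
            (∫⁻ ω, F (X [] ω) ∂μ)
              * ∫⁻ ω, Fp (X l.1 ω) * ENNReal.ofReal (pathWeight X l.1 ω ^ β) ∂μ := by
          refine tsum_congr fun l => ?_
          simp_rw [hterm]
          rw [ENNReal.tsum_mul_left, hinner l.1]
      _ = (∫⁻ ω, F (X [] ω) ∂μ)
            * ∑' (l : {l : List ℕ // l.length = n}),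
                ∫⁻ ω, Fp (X l.1 ω) * ENNReal.ofReal (pathWeight X l.1 ω ^ β) ∂μ :=
          ENNReal.tsum_mul_left
      _ = (∫⁻ ω, F (X [] ω) ∂μ)
            * ((∫⁻ ω, Fp (X [] ω) ∂μ)
              * (∫⁻ ω, ∑' j, ENNReal.ofReal ((X [] ω).2 j ^ β) ∂μ) ^ n) := by
          rw [ih Fp hFpm]
      _ = (∫⁻ ω, F (X [] ω) ∂μ)
            * (∫⁻ ω, ∑' j, ENNReal.ofReal ((X [] ω).2 j ^ β) ∂μ) ^ (n + 1) := by
          rw [pow_succ']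

end Indep

/-- `W_n = ∑_{i ∈ A_n} Q_i Π_i`, the weighted sum over generation `n`.
(Offspring beyond the number of children `N` carry weight `C_i = 0`, so they do not
contribute; this encodes `N ∈ ℕ ∪ {∞}` through vanishing weights.) -/
def genSum {Ω : Type*} (X : List ℕ → Ω → ℝ × (ℕ → ℝ)) (n : ℕ) (ω : Ω) : ℝ :=
  ∑' l : {l : List ℕ // l.length = n}, (X l.1 ω).1 * pathWeight X l.1 ω

/-- `ρ_β = E[∑_{i=1}^N C_i^β]`, valued in `ℝ≥0∞`. -/
def rhoE {Ω : Type*} [MeasurableSpace Ω] (μ : Measure Ω) (C : ℕ → Ω → ℝ) (β : ℝ) : ℝ≥0∞ :=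
  ∫⁻ ω, ∑' i, ENNReal.ofReal (C i ω ^ β) ∂μ

/-- A positive slowly varying function (positive on `[1, ∞)`, so that `1/L` is
locally bounded there). -/
def SlowlyVarying (L : ℝ → ℝ) : Prop :=
  (∀ x, 1 ≤ x → 0 < L x) ∧ ∀ c, 0 < c → Tendsto (fun x => L (c * x) / L x) atTop (𝓝 1)

set_option maxHeartbeats 1000000 in
/-- If `E[|Q|^β] < ∞` and `ρ_β < 1` for some `0 < β ≤ 1`, then `R = ∑_{n=0}^∞ W_n`
converges almost surely, and `E[|R|^β] < ∞`. -/
theorem series_Wn_converges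
{Ω : Type*} [MeasurableSpace Ω] (μ : Measure Ω) [IsProbabilityMeasure μ]
    (X : List ℕ → Ω → ℝ × (ℕ → ℝ)) (Q : Ω → ℝ) (C : ℕ → Ω → ℝ)
    (hroot : ∀ ω, X [] ω = (Q ω, fun i => C i ω))
    (hmeas : ∀ l, Measurable (X l))
    (hindep : iIndepFun X μ)
    (hident : ∀ l, μ.map (X l) = μ.map (X []))
    (hCpos : ∀ l i ω, 0 ≤ (X l ω).2 i)
    (β : ℝ) (hβ0 : 0 < β) (hβ1 : β ≤ 1)
    (hQmom : ∫⁻ ω, ENNReal.ofReal (|Q ω| ^ β) ∂μ < ⊤)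
    (hrho : rhoE μ C β < 1) :
    (∀ᵐ ω ∂μ, Summable fun n => genSum X n ω) ∧
      ∫⁻ ω, ENNReal.ofReal (|∑' n, genSum X n ω| ^ β) ∂μ < ⊤ := by
  have hpw : ∀ l ω, 0 ≤ pathWeight X l ω := fun l ω => pathWeight_nonneg hCpos l ω
  set A : List ℕ → Ω → ℝ≥0∞ :=
    fun l ω => ENNReal.ofReal (|(X l ω).1 * pathWeight X l ω| ^ β) with hA
  have hAmeas : ∀ l, Measurable (A l) := fun l =>
    (((Real.continuous_rpow_const hβ0.le).measurable).comp
      (((hmeas l).fst.mul (measurable_pathWeight hmeas l)).abs)).ennreal_ofReal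
  set G : ℕ → Ω → ℝ≥0∞ :=
    fun n ω => ∑' l : {l : List ℕ // l.length = n}, A l.1 ω with hG
  have hGmeas : ∀ n, Measurable (G n) := fun n => Measurable.ennreal_tsum fun l => hAmeas l.1
  set F0 : ℝ × (ℕ → ℝ) → ℝ≥0∞ := fun x => ENNReal.ofReal (|x.1| ^ β) with hF0
  have hF0m : Measurable F0 :=
    (((Real.continuous_rpow_const hβ0.le).measurable).comp (measurable_fst.abs)).ennreal_ofReal
  have hGint : ∀ n, ∫⁻ ω, G n ω ∂μ
      = (∫⁻ ω, ENNReal.ofReal (|Q ω| ^ β) ∂μ) * (rhoE μ C β) ^ n := by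
    intro n
    simp only [hG]
    rw [lintegral_tsum (fun l : {l : List ℕ // l.length = n} => (hAmeas l.1).aemeasurable)]
    have hsplit : ∀ (l : List ℕ) (ω : Ω),
        A l ω = F0 (X l ω) * ENNReal.ofReal (pathWeight X l ω ^ β) := by
      intro l ω
      rw [hA, hF0]
      simp only
      rw [abs_mul, abs_of_nonneg (hpw l ω), Real.mul_rpow (abs_nonneg _) (hpw l ω),
        ENNReal.ofReal_mul (Real.rpow_nonneg (abs_nonneg _) _)]
    calc ∑' l : {l : List ℕ // l.length = n}, ∫⁻ ω, A l.1 ω ∂μ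
        = ∑' l : {l : List ℕ // l.length = n},
            ∫⁻ ω, F0 (X l.1 ω) * ENNReal.ofReal (pathWeight X l.1 ω ^ β) ∂μ := by
          exact tsum_congr fun l => lintegral_congr fun ω => hsplit l.1 ω
      _ = (∫⁻ ω, F0 (X [] ω) ∂μ)
            * (∫⁻ ω, ∑' j, ENNReal.ofReal ((X [] ω).2 j ^ β) ∂μ) ^ n :=
          keyA hmeas hindep hident hβ0.le hCpos n F0 hF0m
      _ = (∫⁻ ω, ENNReal.ofReal (|Q ω| ^ β) ∂μ) * (rhoE μ C β) ^ n := by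
          congr 1
          · refine lintegral_congr fun ω => ?_
            rw [hF0]; simp only [hroot ω]
          · congr 1
            refine lintegral_congr fun ω => tsum_congr fun j => ?_
            rw [hroot ω]
  have htotal : ∫⁻ ω, ∑' n, G n ω ∂μ < ⊤ := by
    rw [lintegral_tsum (fun n => (hGmeas n).aemeasurable)]
    simp_rw [hGint]
    rw [ENNReal.tsum_mul_left, ENNReal.tsum_geometric]
    exact ENNReal.mul_lt_top hQmom (ENNReal.inv_lt_top.mpr (tsub_pos_of_lt hrho))
  have hae : ∀ᵐ ω ∂μ, ∑' n, G n ω < ⊤ :=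
    ae_lt_top (Measurable.ennreal_tsum hGmeas) htotal.ne
  have hgen : ∀ (ω : Ω) (n : ℕ), ENNReal.ofReal (|genSum X n ω| ^ β) ≤ G n ω := fun ω n =>
    ofReal_abs_tsum_rpow_le
      (fun l : {l : List ℕ // l.length = n} => (X l.1 ω).1 * pathWeight X l.1 ω) hβ0 hβ1
  constructor
  · filter_upwards [hae] with ω hω
    have h1 : ∑' n, ENNReal.ofReal (|genSum X n ω| ^ β) < ⊤ :=
      lt_of_le_of_lt (ENNReal.tsum_le_tsum fun n => hgen ω n) hω
    have h2 : Summable fun n => |genSum X n ω| ^ β := by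
      have h := ENNReal.summable_toReal h1.ne
      refine h.congr fun n => ?_
      rw [ENNReal.toReal_ofReal (Real.rpow_nonneg (abs_nonneg _) _)]
    have h3 : Tendsto (fun n => |genSum X n ω| ^ β) atTop (𝓝 0) := h2.tendsto_atTop_zero
    have h4 : ∀ᶠ n in atTop, |genSum X n ω| ^ β < 1 := h3.eventually_lt_const one_pos
    obtain ⟨N, hN⟩ := eventually_atTop.mp h4
    rw [← summable_abs_iff]
    refine (summable_nat_add_iff N).mp ?_
    refine Summable.of_nonneg_of_le (fun n => abs_nonneg _) (fun n => ?_)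
      ((summable_nat_add_iff N).mpr h2)
    have hxβ : |genSum X (n + N) ω| ^ β ≤ 1 := (hN (n + N) (by omega)).le
    have hx0 : 0 ≤ |genSum X (n + N) ω| := abs_nonneg _
    have hx1 : |genSum X (n + N) ω| ≤ 1 := by
      by_contra hgt
      push_neg at hgt
      have : (1 : ℝ) < |genSum X (n + N) ω| ^ β :=
        (Real.one_lt_rpow_iff_of_pos (lt_trans one_pos hgt)).mpr (Or.inl ⟨hgt, hβ0⟩)
      linarith
    rcases eq_or_lt_of_le hx0 with h | h
    · rw [← h, Real.zero_rpow hβ0.ne']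
    · calc |genSum X (n + N) ω| = |genSum X (n + N) ω| ^ (1 : ℝ) := (Real.rpow_one _).symm
        _ ≤ |genSum X (n + N) ω| ^ β := Real.rpow_le_rpow_of_exponent_ge h hx1 hβ1
  · calc ∫⁻ ω, ENNReal.ofReal (|∑' n, genSum X n ω| ^ β) ∂μ
        ≤ ∫⁻ ω, ∑' n, ENNReal.ofReal (|genSum X n ω| ^ β) ∂μ :=
          lintegral_mono fun ω => ofReal_abs_tsum_rpow_le _ hβ0 hβ1
      _ ≤ ∫⁻ ω, ∑' n, G n ω ∂μ :=
          lintegral_mono fun ω => ENNReal.tsum_le_tsum fun n => hgen ω n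
      _ < ⊤ := htotal
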